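/- Under the billiard polygon setup with h the support function of an ellipse and under the Joachimsthal hypothesis, the feet of the perpendiculars dropped from the center of the ellipse to the tangent lines at the vertices have center of mass at the center: Σ_{i=1}^{n} h(ψᵢ)·(cos ψᵢ, sin ψᵢ) = (0, 0). -/

import Mathlib

open Real

/-- The feet of the perpendiculars from the center of the ellipse to the tangent lines at the vertices have center of mass at the center. -/
theorem stmt_11
    (a₁ a₂ : ℝ) (ha₁ : 0 < a₁) (ha₂ : 0 < a₂)
    (h : ℝ → ℝ)
    (hh : ∀ x : ℝ, h x = Real.sqrt (a₁ ^ 2 * Real.cos x ^ 2 + a₂ ^ 2 * Real.sin x ^ 2))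
    (n : ℕ) (hn : 2 ≤ n)
    (φ ψ δ : ℕ → ℝ)
    (hφ : φ n = φ 0 + 2 * Real.pi)
    (hψ : ∀ i ∈ Finset.Icc 1 n, ψ i = (φ (i - 1) + φ i) / 2)
    (hδ : ∀ i ∈ Finset.Icc 1 n, δ i = (φ i - φ (i - 1)) / 2)
    (M : ℕ → EuclideanSpace ℝ (Fin 2))
    (hM : ∀ i ∈ Finset.Icc 1 n, M i
        = h (ψ i) • (!₂[Real.cos (ψ i), Real.sin (ψ i)] : EuclideanSpace ℝ (Fin 2))
        + deriv h (ψ i) • (!₂[-Real.sin (ψ i), Real.cos (ψ i)] : EuclideanSpace ℝ (Fin 2)))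
    (hMwrap : M (n + 1) = M 1)
    (chord : ∀ i ∈ Finset.Icc 1 n, ∃ t : ℝ, 0 < t ∧
        M (i + 1) - M i = t • (!₂[-Real.sin (φ i), Real.cos (φ i)] : EuclideanSpace ℝ (Fin 2)))
    (J : ℝ) (hJ : 0 < J)
    (hJoach : ∀ i ∈ Finset.Icc 1 n, Real.sin (δ i) = J * h (ψ i))
    : ∑ i ∈ Finset.Icc 1 n,
      h (ψ i) • (!₂[Real.cos (ψ i), Real.sin (ψ i)] : EuclideanSpace ℝ (Fin 2)) = 0 := by
  set F : ℕ → EuclideanSpace ℝ (Fin 2) :=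
    fun i => (2*J)⁻¹ • (!₂[Real.sin (φ i), -Real.cos (φ i)] : EuclideanSpace ℝ (Fin 2)) with hF
  have key : ∀ i ∈ Finset.Icc 1 n,
      h (ψ i) • (!₂[Real.cos (ψ i), Real.sin (ψ i)] : EuclideanSpace ℝ (Fin 2))
        = F i - F (i-1) := by
    intro i hi
    have hJh : J * h (ψ i) = Real.sin (δ i) := (hJoach i hi).symm
    have hψi := hψ i hi
    have hδi := hδ i hi
    have hJ' : (2*J) ≠ 0 := by positivity
    have e0 : h (ψ i) * Real.cos (ψ i)
        = (2*J)⁻¹ * Real.sin (φ i) - (2*J)⁻¹ * Real.sin (φ (i-1)) := by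
      have hs := Real.sin_sub_sin (φ i) (φ (i-1))
      rw [show φ i + φ (i-1) = φ (i-1) + φ i from add_comm _ _] at hs
      rw [hψi]
      rw [hψi, hδi] at hJh
      field_simp
      linear_combination -hs + 2 * Real.cos ((φ (i-1) + φ i) / 2) * hJh
    have e1 : h (ψ i) * Real.sin (ψ i)
        = (2*J)⁻¹ * (-Real.cos (φ i)) - (2*J)⁻¹ * (-Real.cos (φ (i-1))) := by
      have hc := Real.cos_sub_cos (φ i) (φ (i-1))
      rw [show φ i + φ (i-1) = φ (i-1) + φ i from add_comm _ _] at hc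
      rw [hψi]
      rw [hψi, hδi] at hJh
      field_simp
      linear_combination hc + 2 * Real.sin ((φ (i-1) + φ i) / 2) * hJh
    ext x
    fin_cases x <;> simp [hF] <;> [skip; skip]
    · simpa using e0
    · simpa using e1
  rw [Finset.sum_congr rfl key]
  have hIcc : Finset.Icc 1 n = Finset.Ico 1 (n+1) := by
    rw [Finset.Ico_add_one_right_eq_Icc]
  have hstep : ∑ i ∈ Finset.Icc 1 n, (F i - F (i-1))
      = ∑ i ∈ Finset.range n, (F (i+1) - F i) := by
    rw [hIcc, Finset.sum_Ico_eq_sum_range]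
    simp [add_comm]
  rw [hstep, Finset.sum_range_sub F]
  have hsin : Real.sin (φ n) = Real.sin (φ 0) := by
    rw [hφ]; exact Real.sin_add_two_pi _
  have hcos : Real.cos (φ n) = Real.cos (φ 0) := by
    rw [hφ]; exact Real.cos_add_two_pi _
  simp [hF, hsin, hcos]
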